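/- arXiv:2008.09997 — 5 statements merged into one kernel-verified Lean document; each statement's English description precedes it below -/
import Mathlib

section
/- Let X be a simplicial complex on n vertices that is not the complete (n−2)-dimensional skeleton (i.e., X is not the family of all subsets of V of size at most n−1). If X is not the complete complex, then X is (n−2)-representable. -/
/-- A simplicial complex: a family of finite subsets closed under subsets. -/
def IsSimplicialComplex {α : Type*} (X : Set (Finset α)) : Prop :=
  ∀ σ ∈ X, ∀ τ, τ ⊆ σ → τ ∈ X

/-- `X` is d-representable: it is the nerve of a family of compact convex sets in ℝ^d. -/
def IsRepresentable {α : Type*} (d : ℕ) (X : Set (Finset α)) : Prop :=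
  ∃ C : α → Set (EuclideanSpace ℝ (Fin d)),
    (∀ v, IsCompact (C v) ∧ Convex ℝ (C v)) ∧
      ∀ σ : Finset α, σ ∈ X ↔ (⋂ v ∈ σ, C v).Nonempty

namespace Rep11Aux

variable {α : Type*} [Fintype α] [DecidableEq α]

/-- height of the point of a face: 1 if it contains the apex `x₀`, `n` otherwise -/
noncomputable def aval (x₀ : α) (σ : Finset α) : ℝ :=
  if x₀ ∈ σ then 1 else (Fintype.card α : ℝ)

/-- the point associated to a face -/
noncomputable def vec (x₀ w₁ : α) (e : Fin (Fintype.card α - 2) → α) (σ : Finset α) :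
    Fin (Fintype.card α - 2) → ℝ :=
  fun i => aval x₀ σ * ((if e i ∈ σ then (1:ℝ) else 0) - (if w₁ ∈ σ then (1:ℝ) else 0))

/-- linear combination of the face points with weights `lam` -/
noncomputable def Phi (x₀ w₁ : α) (e : Fin (Fintype.card α - 2) → α)
    (lam : Finset α → ℝ) : Fin (Fintype.card α - 2) → ℝ :=
  ∑ σ : Finset α, lam σ • vec x₀ w₁ e σ

/-- admissible weights for the vertex `v` -/
def Sv (X : Set (Finset α)) (v : α) : Set (Finset α → ℝ) :=
  {lam | (∀ σ, 0 ≤ lam σ) ∧ (∑ σ : Finset α, lam σ) = 1 ∧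
    ∀ σ, lam σ ≠ 0 → σ ∈ X ∧ v ∈ σ}

/-- virtual `w`-coordinate of a point -/
noncomputable def ff (e : Fin (Fintype.card α - 2) → α) (w : α)
    (z : Fin (Fintype.card α - 2) → ℝ) : ℝ :=
  if h : ∃ i, e i = w then z (Classical.choose h) else 0

/-- coverage of vertex `w` by the weights `lam` -/
noncomputable def kk (lam : Finset α → ℝ) (w : α) : ℝ :=
  ∑ σ : Finset α, lam σ * (if w ∈ σ then (1:ℝ) else 0)

theorem ff_phi (x₀ w₁ : α) (e : Fin (Fintype.card α - 2) → α)
    (hrange : ∀ w, w ≠ x₀ → w ≠ w₁ → ∃ i, e i = w)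
    (lam : Finset α → ℝ) (w : α) (hw : w ≠ x₀) :
    ff e w (Phi x₀ w₁ e lam)
      = ∑ σ : Finset α, lam σ *
          (aval x₀ σ * ((if w ∈ σ then (1:ℝ) else 0) - (if w₁ ∈ σ then (1:ℝ) else 0))) := by
  unfold ff
  split_ifs with h
  · have hi : e (Classical.choose h) = w := Classical.choose_spec h
    rw [Phi, Finset.sum_apply]
    simp only [Pi.smul_apply, smul_eq_mul, vec, hi]
  · have hww : w = w₁ := by
      by_contra hne
      exact h (hrange w hw hne)
    subst hww
    rw [eq_comm]
    apply Finset.sum_eq_zero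
    intro σ _
    simp [sub_self]


theorem aval_pos (x₀ : α) (σ : Finset α) (hc : 0 < Fintype.card α) : 0 < aval x₀ σ := by
  unfold aval; split_ifs
  · norm_num
  · exact_mod_cast hc

-- comparison: for weights admissible for v, the v-coordinate dominates
theorem key_le (x₀ w₁ : α) (e : Fin (Fintype.card α - 2) → α)
    (hrange : ∀ w, w ≠ x₀ → w ≠ w₁ → ∃ i, e i = w) (hc : 0 < Fintype.card α)
    (X : Set (Finset α)) {v : α} (hv : v ≠ x₀) {lam : Finset α → ℝ}
    (hlam : lam ∈ Sv X v) (w : α) (hw : w ≠ x₀) :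
    ff e w (Phi x₀ w₁ e lam) ≤ ff e v (Phi x₀ w₁ e lam) := by
  rw [ff_phi x₀ w₁ e hrange lam w hw, ff_phi x₀ w₁ e hrange lam v hv]
  apply Finset.sum_le_sum
  intro σ _
  by_cases h : lam σ = 0
  · simp [h]
  · have hvσ : v ∈ σ := (hlam.2.2 σ h).2
    have ha : (0:ℝ) ≤ aval x₀ σ := (aval_pos x₀ σ hc).le
    have h1 : (if w ∈ σ then (1:ℝ) else 0) ≤ (if v ∈ σ then (1:ℝ) else 0) := by
      simp only [hvσ, if_true]
      split_ifs <;> norm_num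
    have h2 : 0 ≤ lam σ := hlam.1 σ
    have h3 := sub_le_sub_right h1 (if w₁ ∈ σ then (1:ℝ) else 0)
    have := mul_le_mul_of_nonneg_left h3 ha
    exact mul_le_mul_of_nonneg_left this h2

-- equality of coordinates forces membership in all faces of the support
theorem key_eq (x₀ w₁ : α) (e : Fin (Fintype.card α - 2) → α)
    (hrange : ∀ w, w ≠ x₀ → w ≠ w₁ → ∃ i, e i = w) (hc : 0 < Fintype.card α)
    (X : Set (Finset α)) {v : α} (hv : v ≠ x₀) {lam : Finset α → ℝ}
    (hlam : lam ∈ Sv X v) (u : α) (hu : u ≠ x₀)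
    (heq : ff e u (Phi x₀ w₁ e lam) = ff e v (Phi x₀ w₁ e lam)) :
    ∀ σ, lam σ ≠ 0 → u ∈ σ := by
  have h0 : ∑ σ : Finset α, lam σ *
      (aval x₀ σ * ((if v ∈ σ then (1:ℝ) else 0) - (if u ∈ σ then (1:ℝ) else 0))) = 0 := by
    have e1 := ff_phi x₀ w₁ e hrange lam v hv
    have e2 := ff_phi x₀ w₁ e hrange lam u hu
    have : ff e v (Phi x₀ w₁ e lam) - ff e u (Phi x₀ w₁ e lam) = 0 := by rw [heq]; ring
    rw [e1, e2, ← Finset.sum_sub_distrib] at this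
    calc ∑ σ : Finset α, lam σ *
        (aval x₀ σ * ((if v ∈ σ then (1:ℝ) else 0) - (if u ∈ σ then (1:ℝ) else 0)))
        = ∑ σ : Finset α,
            (lam σ * (aval x₀ σ * ((if v ∈ σ then (1:ℝ) else 0) - (if w₁ ∈ σ then (1:ℝ) else 0))) -
             lam σ * (aval x₀ σ * ((if u ∈ σ then (1:ℝ) else 0) - (if w₁ ∈ σ then (1:ℝ) else 0)))) := by
          apply Finset.sum_congr rfl
          intro σ _
          ring
      _ = 0 := this
  have hnn : ∀ σ ∈ (Finset.univ : Finset (Finset α)), 0 ≤ lam σ *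
      (aval x₀ σ * ((if v ∈ σ then (1:ℝ) else 0) - (if u ∈ σ then (1:ℝ) else 0))) := by
    intro σ _
    by_cases h : lam σ = 0
    · simp [h]
    · have hvσ : v ∈ σ := (hlam.2.2 σ h).2
      have ha : (0:ℝ) ≤ aval x₀ σ := (aval_pos x₀ σ hc).le
      have h1 : (0:ℝ) ≤ (if v ∈ σ then (1:ℝ) else 0) - (if u ∈ σ then (1:ℝ) else 0) := by
        simp only [hvσ, if_true]; split_ifs <;> norm_num
      exact mul_nonneg (hlam.1 σ) (mul_nonneg ha h1)
  intro σ hσ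
  have := (Finset.sum_eq_zero_iff_of_nonneg hnn).mp h0 σ (Finset.mem_univ σ)
  have hvσ : v ∈ σ := (hlam.2.2 σ hσ).2
  have ha : aval x₀ σ ≠ 0 := (aval_pos x₀ σ hc).ne'
  by_contra huσ
  simp only [hvσ, if_true, huσ, if_false, sub_zero, mul_one] at this
  exact hσ (by
    rcases mul_eq_zero.mp this with h' | h'
    · exact h'
    · exact absurd h' ha)

theorem kk_nonneg {lam : Finset α → ℝ} (h : ∀ σ, 0 ≤ lam σ) (w : α) : 0 ≤ kk lam w := by
  apply Finset.sum_nonneg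
  intro σ _
  apply mul_nonneg (h σ)
  split_ifs <;> norm_num

theorem kk_le_one {X : Set (Finset α)} {v : α} {lam : Finset α → ℝ}
    (hlam : lam ∈ Sv X v) (w : α) : kk lam w ≤ 1 := by
  have : kk lam w ≤ ∑ σ : Finset α, lam σ := by
    apply Finset.sum_le_sum
    intro σ _
    have h1 : (if w ∈ σ then (1:ℝ) else 0) ≤ 1 := by split_ifs <;> norm_num
    calc lam σ * (if w ∈ σ then (1:ℝ) else 0) ≤ lam σ * 1 :=
          mul_le_mul_of_nonneg_left h1 (hlam.1 σ)
      _ = lam σ := mul_one _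
  rw [hlam.2.1] at this
  exact this

theorem kk_eq_one {X : Set (Finset α)} {v : α} {lam : Finset α → ℝ}
    (hlam : lam ∈ Sv X v) (u : α) (hmem : ∀ σ, lam σ ≠ 0 → u ∈ σ) : kk lam u = 1 := by
  have : kk lam u = ∑ σ : Finset α, lam σ := by
    apply Finset.sum_congr rfl
    intro σ _
    by_cases h : lam σ = 0
    · simp [h]
    · simp [hmem σ h]
  rw [this, hlam.2.1]



theorem ff_kk (x₀ w₁ : α) (e : Fin (Fintype.card α - 2) → α)
    (hrange : ∀ w, w ≠ x₀ → w ≠ w₁ → ∃ i, e i = w)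
    (lam : Finset α → ℝ) (w : α) (hw : w ≠ x₀) (c : ℝ)
    (hav : ∀ σ, lam σ ≠ 0 → aval x₀ σ = c) :
    ff e w (Phi x₀ w₁ e lam) = c * kk lam w - c * kk lam w₁ := by
  rw [ff_phi x₀ w₁ e hrange lam w hw]
  calc ∑ σ : Finset α, lam σ *
      (aval x₀ σ * ((if w ∈ σ then (1:ℝ) else 0) - (if w₁ ∈ σ then (1:ℝ) else 0)))
      = ∑ σ : Finset α,
          (c * (lam σ * (if w ∈ σ then (1:ℝ) else 0)) -
           c * (lam σ * (if w₁ ∈ σ then (1:ℝ) else 0))) := by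
        apply Finset.sum_congr rfl
        intro σ _
        by_cases h : lam σ = 0
        · simp [h]
        · rw [hav σ h]; ring
    _ = c * kk lam w - c * kk lam w₁ := by
        rw [Finset.sum_sub_distrib, ← Finset.mul_sum, ← Finset.mul_sum, kk, kk]

theorem Sv_convex (X : Set (Finset α)) (v : α) : Convex ℝ (Sv X v) := by
  intro l1 h1 l2 h2 a b ha hb hab
  refine ⟨?_, ?_, ?_⟩
  · intro σ
    have : (a • l1 + b • l2) σ = a * l1 σ + b * l2 σ := rfl
    rw [this]
    exact add_nonneg (mul_nonneg ha (h1.1 σ)) (mul_nonneg hb (h2.1 σ))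
  · have : ∑ σ : Finset α, (a • l1 + b • l2) σ
        = a * (∑ σ : Finset α, l1 σ) + b * (∑ σ : Finset α, l2 σ) := by
      rw [Finset.mul_sum, Finset.mul_sum, ← Finset.sum_add_distrib]
      rfl
    rw [this, h1.2.1, h2.2.1, mul_one, mul_one, hab]
  · intro σ hσ
    by_cases hz1 : l1 σ = 0
    · by_cases hz2 : l2 σ = 0
      · exfalso
        apply hσ
        show a * l1 σ + b * l2 σ = 0
        rw [hz1, hz2]; ring
      · exact h2.2.2 σ hz2
    · exact h1.2.2 σ hz1

noncomputable def PhiL (x₀ w₁ : α) (e : Fin (Fintype.card α - 2) → α) :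
    (Finset α → ℝ) →ₗ[ℝ] (Fin (Fintype.card α - 2) → ℝ) where
  toFun := Phi x₀ w₁ e
  map_add' := by
    intro l1 l2
    unfold Phi
    rw [← Finset.sum_add_distrib]
    apply Finset.sum_congr rfl
    intro σ _
    show (l1 σ + l2 σ) • _ = _
    rw [add_smul]
  map_smul' := by
    intro c l
    unfold Phi
    simp only [RingHom.id_apply]
    rw [Finset.smul_sum]
    apply Finset.sum_congr rfl
    intro σ _
    show (c * l σ) • _ = _
    rw [mul_smul]

theorem Phi_cont (x₀ w₁ : α) (e : Fin (Fintype.card α - 2) → α) :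
    Continuous (Phi x₀ w₁ e) := by
  unfold Phi
  apply continuous_finset_sum
  intro σ _
  exact (continuous_apply σ).smul continuous_const

theorem Sv_compact (X : Set (Finset α)) (v : α) : IsCompact (Sv X v) := by
  have hdecomp : Sv X v = stdSimplex ℝ (Finset α) ∩
      {lam : Finset α → ℝ | ∀ σ, lam σ ≠ 0 → σ ∈ X ∧ v ∈ σ} := by
    ext lam
    simp only [Sv, stdSimplex, Set.mem_setOf_eq, Set.mem_inter_iff]
    tauto
  rw [hdecomp]
  apply (isCompact_stdSimplex ℝ (Finset α)).inter_right
  have : {lam : Finset α → ℝ | ∀ σ, lam σ ≠ 0 → σ ∈ X ∧ v ∈ σ}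
      = ⋂ σ : Finset α, {lam : Finset α → ℝ | lam σ ≠ 0 → σ ∈ X ∧ v ∈ σ} := by
    ext lam
    simp only [Set.mem_setOf_eq, Set.mem_iInter]
  rw [this]
  apply isClosed_iInter
  intro σ
  by_cases hP : σ ∈ X ∧ v ∈ σ
  · have : {lam : Finset α → ℝ | lam σ ≠ 0 → σ ∈ X ∧ v ∈ σ} = Set.univ := by
      ext lam; simp [hP]
    rw [this]; exact isClosed_univ
  · have : {lam : Finset α → ℝ | lam σ ≠ 0 → σ ∈ X ∧ v ∈ σ}
        = {lam : Finset α → ℝ | lam σ = 0} := by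
      ext lam
      simp only [Set.mem_setOf_eq]
      constructor
      · intro h
        by_contra hne
        exact hP (h hne)
      · intro h hne
        exact absurd h hne
    rw [this]
    exact isClosed_eq (continuous_apply σ) continuous_const

end Rep11Aux

open Finset Rep11Aux

/-- A simplicial complex on n vertices that is neither the complete
(n−2)-dimensional skeleton nor the complete complex is (n−2)-representable. -/
theorem representable_sub_two {α : Type*} [Fintype α] [DecidableEq α]
    (X : Set (Finset α)) (hX : IsSimplicialComplex X)
    (hempty : ∅ ∈ X) (hsing : ∀ v : α, {v} ∈ X)
    (hskel : X ≠ {σ : Finset α | σ.card ≤ Fintype.card α - 1})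
    (hcomplete : X ≠ Set.univ) :
    IsRepresentable (Fintype.card α - 2) X := by
  classical
  have hn2 : 2 ≤ Fintype.card α := by
    by_contra hlt
    push_neg at hlt
    apply hcomplete
    apply Set.eq_univ_of_forall
    intro σ
    have hcard : σ.card ≤ Fintype.card α := Finset.card_le_univ σ
    have h1 : σ.card ≤ 1 := by omega
    rcases Nat.le_one_iff_eq_zero_or_eq_one.mp h1 with h | h
    · rw [Finset.card_eq_zero] at h; rw [h]; exact hempty
    · obtain ⟨a, ha⟩ := Finset.card_eq_one.mp h; rw [ha]; exact hsing a
  have hcpos : 0 < Fintype.card α := by omega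
  have hx : ∃ x₀ : α, Finset.univ.erase x₀ ∉ X := by
    by_contra h
    push_neg at h
    apply hskel
    ext σ
    simp only [Set.mem_setOf_eq]
    constructor
    · intro hσ
      by_contra hc2
      push_neg at hc2
      have h1 : σ.card ≤ Fintype.card α := Finset.card_le_univ σ
      have h2 : σ = Finset.univ := Finset.eq_univ_of_card σ (by omega)
      apply hcomplete
      apply Set.eq_univ_of_forall
      intro τ
      exact hX σ hσ τ (h2 ▸ Finset.subset_univ τ)
    · intro hc2
      have hne : σ ≠ Finset.univ := by
        intro h'
        rw [h', Finset.card_univ] at hc2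
        omega
      obtain ⟨x₀, hx₀⟩ : ∃ x, x ∉ σ := by
        by_contra hall
        push_neg at hall
        exact hne (Finset.eq_univ_iff_forall.mpr hall)
      refine hX _ (h x₀) σ ?_
      intro y hy
      exact Finset.mem_erase.mpr ⟨fun he => hx₀ (he ▸ hy), Finset.mem_univ y⟩
  obtain ⟨x₀, hx₀⟩ := hx
  have hWne : (Finset.univ.erase x₀).Nonempty := by
    rw [← Finset.card_pos, Finset.card_erase_of_mem (Finset.mem_univ _), Finset.card_univ]
    omega
  obtain ⟨w₁, hw₁W⟩ := hWne
  have hw₁x : w₁ ≠ x₀ := (Finset.mem_erase.mp hw₁W).1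
  obtain ⟨e, hrange⟩ :
      ∃ e : Fin (Fintype.card α - 2) → α, ∀ w, w ≠ x₀ → w ≠ w₁ → ∃ i, e i = w := by
    have hScard : ((Finset.univ.erase x₀).erase w₁).card = Fintype.card α - 2 := by
      rw [Finset.card_erase_of_mem hw₁W, Finset.card_erase_of_mem (Finset.mem_univ _),
        Finset.card_univ]
      omega
    refine ⟨fun i => (((Finset.equivFinOfCardEq hScard).symm i :
      {x // x ∈ (Finset.univ.erase x₀).erase w₁}) : α), ?_⟩
    intro w h1 h2
    have hwS : w ∈ (Finset.univ.erase x₀).erase w₁ :=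
      Finset.mem_erase.mpr ⟨h2, Finset.mem_erase.mpr ⟨h1, Finset.mem_univ w⟩⟩
    exact ⟨Finset.equivFinOfCardEq hScard ⟨w, hwS⟩, by simp⟩
  set Ψ := (PiLp.continuousLinearEquiv 2 ℝ (fun _ : Fin (Fintype.card α - 2) => ℝ)).symm with hΨ
  refine ⟨fun v => Ψ '' (Phi x₀ w₁ e '' Sv X v), fun v => ⟨?_, ?_⟩, ?_⟩
  · exact ((Sv_compact X v).image (Phi_cont x₀ w₁ e)).image Ψ.continuous
  · have h1 : Convex ℝ (Phi x₀ w₁ e '' Sv X v) := (Sv_convex X v).linear_image (PhiL x₀ w₁ e)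
    exact h1.linear_image Ψ.toLinearEquiv.toLinearMap
  · intro σ
    constructor
    · -- faces give nonempty intersections
      intro hσ
      refine ⟨Ψ (Phi x₀ w₁ e (fun ρ => if ρ = σ then (1:ℝ) else 0)), ?_⟩
      simp only [Set.mem_iInter]
      intro v hv
      apply Set.mem_image_of_mem Ψ
      apply Set.mem_image_of_mem
      refine ⟨?_, ?_, ?_⟩
      · intro ρ; dsimp only; split_ifs <;> norm_num
      · rw [Finset.sum_ite_eq' Finset.univ σ (fun _ => (1:ℝ))]
        simp
      · intro ρ hρ
        dsimp only at hρ
        by_cases hh : ρ = σ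
        · rw [hh]; exact ⟨hσ, hv⟩
        · simp [hh] at hρ
    · rintro ⟨z0, hz0⟩
      simp only [Set.mem_iInter] at hz0
      have hrep : ∀ v, v ∈ σ → ∃ lam ∈ Sv X v, Phi x₀ w₁ e lam = Ψ.symm z0 := by
        intro v hv
        obtain ⟨y, ⟨lam, hlam, hlameq⟩, hyz⟩ := hz0 v hv
        refine ⟨lam, hlam, ?_⟩
        rw [hlameq, ← hyz]
        exact (Ψ.symm_apply_apply y).symm
      by_cases hσe : σ = ∅
      · rw [hσe]; exact hempty
      by_cases hτ'e : σ.erase x₀ = ∅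
      · rcases (Finset.erase_eq_empty_iff σ x₀).mp hτ'e with h | h
        · exact absurd h hσe
        · rw [h]; exact hsing x₀
      obtain ⟨u₀, hu₀⟩ := Finset.nonempty_of_ne_empty hτ'e
      have hu₀x : u₀ ≠ x₀ := (Finset.mem_erase.mp hu₀).1
      have hu₀σ : u₀ ∈ σ := (Finset.mem_erase.mp hu₀).2
      obtain ⟨lam, hlam, hlamz⟩ := hrep u₀ hu₀σ
      have hstep1 : ∀ u ∈ σ.erase x₀, ∀ ρ, lam ρ ≠ 0 → u ∈ ρ := by
        intro u hu
        have hux : u ≠ x₀ := (Finset.mem_erase.mp hu).1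
        have huσ : u ∈ σ := (Finset.mem_erase.mp hu).2
        obtain ⟨lamu, hlamu, hlamuz⟩ := hrep u huσ
        have e1 : ff e u (Phi x₀ w₁ e lam) ≤ ff e u₀ (Phi x₀ w₁ e lam) :=
          key_le x₀ w₁ e hrange hcpos X hu₀x hlam u hux
        have e2 : ff e u₀ (Phi x₀ w₁ e lamu) ≤ ff e u (Phi x₀ w₁ e lamu) :=
          key_le x₀ w₁ e hrange hcpos X hux hlamu u₀ hu₀x
        rw [hlamuz, ← hlamz] at e2
        exact key_eq x₀ w₁ e hrange hcpos X hu₀x hlam u hux (le_antisymm e1 e2)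
      by_cases hxσ : x₀ ∈ σ
      · by_cases hmix : ∃ ρ, lam ρ ≠ 0 ∧ x₀ ∈ ρ
        · obtain ⟨ρ, hρ0, hρx⟩ := hmix
          refine hX ρ (hlam.2.2 ρ hρ0).1 σ ?_
          intro y hy
          by_cases hyx : y = x₀
          · rw [hyx]; exact hρx
          · exact hstep1 y (Finset.mem_erase.mpr ⟨hyx, hy⟩) ρ hρ0
        · push_neg at hmix
          obtain ⟨lam', hlam', hlam'z⟩ := hrep x₀ hxσ
          exfalso
          have hsame : Phi x₀ w₁ e lam = Phi x₀ w₁ e lam' := by rw [hlamz, hlam'z]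
          have hE : ∀ w, w ≠ x₀ →
              (Fintype.card α : ℝ) * (kk lam w - kk lam w₁) = kk lam' w - kk lam' w₁ := by
            intro w hw
            have h1 := ff_kk x₀ w₁ e hrange lam w hw (Fintype.card α : ℝ)
              (fun ρ hρ => by unfold aval; rw [if_neg (hmix ρ hρ)])
            have h2 := ff_kk x₀ w₁ e hrange lam' w hw 1
              (fun ρ hρ => by unfold aval; rw [if_pos (hlam'.2.2 ρ hρ).2])
            rw [hsame] at h1
            rw [h2] at h1
            linarith
          have hkk1 : kk lam u₀ = 1 := kk_eq_one hlam u₀ (hstep1 u₀ hu₀)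
          have hWcard : (Finset.univ.erase x₀).card = Fintype.card α - 1 := by
            rw [Finset.card_erase_of_mem (Finset.mem_univ _), Finset.card_univ]
          have hsumW : ∑ w ∈ Finset.univ.erase x₀, kk lam w ≤ (Fintype.card α : ℝ) - 2 := by
            have hswap : ∑ w ∈ Finset.univ.erase x₀, kk lam w
                = ∑ ρ : Finset α, lam ρ *
                    (((Finset.univ.erase x₀).filter (fun w => w ∈ ρ)).card : ℝ) := by
              unfold kk
              rw [Finset.sum_comm]
              apply Finset.sum_congr rfl
              intro ρ _
              rw [← Finset.mul_sum, Finset.sum_boole]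
            rw [hswap]
            have h2 : ∀ ρ ∈ (Finset.univ : Finset (Finset α)),
                lam ρ * (((Finset.univ.erase x₀).filter (fun w => w ∈ ρ)).card : ℝ)
                  ≤ lam ρ * ((Fintype.card α : ℝ) - 2) := by
              intro ρ _
              by_cases h : lam ρ = 0
              · simp [h]
              · apply mul_le_mul_of_nonneg_left _ (hlam.1 ρ)
                have hρX : ρ ∈ X := (hlam.2.2 ρ h).1
                have hρx₀ : x₀ ∉ ρ := hmix ρ h
                have hsub : ρ ⊆ Finset.univ.erase x₀ := fun y hy =>
                  Finset.mem_erase.mpr ⟨fun hh => hρx₀ (hh ▸ hy), Finset.mem_univ y⟩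
                have hρne : ρ ≠ Finset.univ.erase x₀ := fun hh => hx₀ (hh ▸ hρX)
                have hlt : ρ.card < (Finset.univ.erase x₀).card :=
                  Finset.card_lt_card (Finset.ssubset_iff_subset_ne.mpr ⟨hsub, hρne⟩)
                have hfil : ((Finset.univ.erase x₀).filter (fun w => w ∈ ρ)).card ≤ ρ.card := by
                  apply Finset.card_le_card
                  intro y hy
                  exact (Finset.mem_filter.mp hy).2
                have hbound : ((Finset.univ.erase x₀).filter (fun w => w ∈ ρ)).card
                    ≤ Fintype.card α - 2 := by omega
                calc (((Finset.univ.erase x₀).filter (fun w => w ∈ ρ)).card : ℝ)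
                    ≤ ((Fintype.card α - 2 : ℕ) : ℝ) := by exact_mod_cast hbound
                  _ = (Fintype.card α : ℝ) - 2 := by
                      rw [Nat.cast_sub (by omega)]; norm_num
            calc ∑ ρ : Finset α, lam ρ *
                (((Finset.univ.erase x₀).filter (fun w => w ∈ ρ)).card : ℝ)
                ≤ ∑ ρ : Finset α, lam ρ * ((Fintype.card α : ℝ) - 2) := Finset.sum_le_sum h2
              _ = (Fintype.card α : ℝ) - 2 := by rw [← Finset.sum_mul, hlam.2.1, one_mul]
          have hpigeon : ∃ w ∈ Finset.univ.erase x₀,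
              1 / ((Fintype.card α : ℝ) - 1) ≤ 1 - kk lam w := by
            by_contra hcon
            push_neg at hcon
            have hlt : ∑ w ∈ Finset.univ.erase x₀, (1 - kk lam w)
                < ∑ w ∈ Finset.univ.erase x₀, 1 / ((Fintype.card α : ℝ) - 1) :=
              Finset.sum_lt_sum_of_nonempty ⟨w₁, hw₁W⟩ hcon
            have hnR : (2:ℝ) ≤ (Fintype.card α : ℝ) := by exact_mod_cast hn2
            have hr : ∑ w ∈ Finset.univ.erase x₀, 1 / ((Fintype.card α : ℝ) - 1) = 1 := by
              rw [Finset.sum_const, hWcard, nsmul_eq_mul, Nat.cast_sub (by omega)]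
              push_cast
              rw [mul_one_div, div_self (ne_of_gt (by linarith))]
            have hl : ∑ w ∈ Finset.univ.erase x₀, (1 - kk lam w)
                = ((Finset.univ.erase x₀).card : ℝ) - ∑ w ∈ Finset.univ.erase x₀, kk lam w := by
              rw [Finset.sum_sub_distrib, Finset.sum_const, nsmul_eq_mul, mul_one]
            rw [hl, hr, hWcard, Nat.cast_sub (by omega)] at hlt
            push_cast at hlt
            linarith [hsumW]
          obtain ⟨ws, hwsW, hws⟩ := hpigeon
          have hwsx : ws ≠ x₀ := (Finset.mem_erase.mp hwsW).1
          have heq2 : (Fintype.card α : ℝ) * (1 - kk lam ws) = kk lam' u₀ - kk lam' ws := by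
            have a1 := hE u₀ hu₀x
            have a2 := hE ws hwsx
            rw [hkk1] at a1
            linarith
          have hb1 : kk lam' u₀ ≤ 1 := kk_le_one hlam' u₀
          have hb2 : 0 ≤ kk lam' ws := kk_nonneg hlam'.1 ws
          have hnR : (2:ℝ) ≤ (Fintype.card α : ℝ) := by exact_mod_cast hn2
          have h5 : (Fintype.card α : ℝ) * (1 / ((Fintype.card α : ℝ) - 1))
              ≤ (Fintype.card α : ℝ) * (1 - kk lam ws) :=
            mul_le_mul_of_nonneg_left hws (by linarith)
          have h6 : (1:ℝ) < (Fintype.card α : ℝ) * (1 / ((Fintype.card α : ℝ) - 1)) := by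
            rw [mul_one_div, lt_div_iff₀ (by linarith)]
            linarith
          linarith
      · obtain ⟨ρ₀, _, hρ₀⟩ := Finset.exists_ne_zero_of_sum_ne_zero
          (by rw [hlam.2.1]; exact one_ne_zero :
            ∑ ρ : Finset α, lam ρ ≠ 0)
        refine hX ρ₀ (hlam.2.2 ρ₀ hρ₀).1 σ ?_
        intro y hy
        have hyx : y ≠ x₀ := fun h => hxσ (h ▸ hy)
        exact hstep1 y (Finset.mem_erase.mpr ⟨hyx, hy⟩) ρ₀ hρ₀
end

section
/- Let X be a simplicial complex on vertex set V, and let V₁, ..., V_k ⊆ V satisfy V_i ∉ X for all i and, for every missing face τ of X, there exists i with |τ \ V_i| ≤ 1. Then X can be written as an intersection X = X₁ ∩ ... ∩ X_k where each X_i is (|V_i| − 1)-representable; in particular, X is (Σ_i (|V_i| − 1))-representable. -/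
/-- `τ` is a missing face of `X`. -/
def IsMissingFace {α : Type*} (X : Set (Finset α)) (τ : Finset α) : Prop :=
  τ ∉ X ∧ ∀ σ, σ ⊂ τ → σ ∈ X

lemma exists_missing_face {α : Type*} [DecidableEq α] (X : Set (Finset α))
    (σ : Finset α) (hσ : σ ∉ X) : ∃ τ, τ ⊆ σ ∧ IsMissingFace X τ := by
  classical
  induction σ using Finset.strongInduction with
  | _ σ ih =>
    by_cases h : ∀ ρ, ρ ⊂ σ → ρ ∈ X
    · exact ⟨σ, subset_rfl, hσ, h⟩
    · push_neg at h
      obtain ⟨ρ, hρσ, hρ⟩ := h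
      obtain ⟨τ, h1, h2⟩ := ih ρ hρσ hρ
      exact ⟨τ, h1.trans hρσ.subset, h2⟩

/-- linear functional given by coefficients -/
noncomputable def lfun {m : ℕ} (c : Fin m → ℝ) (y : EuclideanSpace ℝ (Fin m)) : ℝ :=
  ∑ i, c i * y i

lemma lfun_linear {m : ℕ} (c : Fin m → ℝ) : IsLinearMap ℝ (lfun c) := by
  constructor
  · intro a b; simp [lfun, PiLp.add_apply, mul_add, Finset.sum_add_distrib]
  · intro s a; simp only [lfun, PiLp.smul_apply, smul_eq_mul, Finset.mul_sum]
    exact Finset.sum_congr rfl (fun i _ => by ring)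

lemma convexHull_lfun_le {m : ℕ} (c : Fin m → ℝ) (r : ℝ)
    (S : Set (EuclideanSpace ℝ (Fin m))) (h : ∀ p ∈ S, lfun c p ≤ r) :
    ∀ x ∈ convexHull ℝ S, lfun c x ≤ r :=
  fun _x hx => convexHull_min h (convex_halfSpace_le (lfun_linear c) r) hx

lemma convexHull_lfun_eq {m : ℕ} (c : Fin m → ℝ) (r : ℝ)
    (S : Set (EuclideanSpace ℝ (Fin m))) (h : ∀ p ∈ S, lfun c p = r) :
    ∀ x ∈ convexHull ℝ S, lfun c x = r :=
  fun _x hx => convexHull_min h (convex_hyperplane (lfun_linear c) r) hx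

lemma lfun_coord {m : ℕ} [DecidableEq (Fin m)] (i : Fin m) (y : EuclideanSpace ℝ (Fin m)) :
    lfun (fun j => if j = i then 1 else 0) y = y i := by
  simp [lfun, ite_mul]

lemma rep_Z {α : Type*} [Fintype α] [DecidableEq α]
    (X : Set (Finset α)) (hX : IsSimplicialComplex X)
    (hempty : ∅ ∈ X) (hsing : ∀ v : α, {v} ∈ X)
    (W : Finset α) (hW : W ∉ X) :
    IsRepresentable (W.card - 1)
      {σ : Finset α | ∀ τ, IsMissingFace X τ → (τ \ W).card ≤ 1 → ¬ τ ⊆ σ} := by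
  classical
  set n := W.card with hn
  set Z : Set (Finset α) :=
    {σ : Finset α | ∀ τ, IsMissingFace X τ → (τ \ W).card ≤ 1 → ¬ τ ⊆ σ} with hZdef
  have hZdown : ∀ {σ' σ : Finset α}, σ' ⊆ σ → σ ∈ Z → σ' ∈ Z := by
    intro σ' σ hss hσ τ h1 h2 h3
    exact hσ τ h1 h2 (h3.trans hss)
  have hWne : W.Nonempty := by
    rcases W.eq_empty_or_nonempty with rfl | h
    · exact absurd hempty hW
    · exact h
  have hαne : Nonempty α := ⟨hWne.choose⟩
  have h2n : 2 ≤ n := by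
    by_contra h
    push_neg at h
    have h1 : W.card ≤ 1 := by omega
    rcases Finset.card_le_one_iff_subset_singleton.mp h1 with ⟨v, hv⟩
    rcases Finset.subset_singleton_iff.mp hv with rfl | rfl
    · exact hW hempty
    · exact hW (hsing v)
  obtain ⟨τW, hτWsub, hτWmiss⟩ := exists_missing_face X W hW
  have hWZ : W ∉ Z := by
    intro h
    exact h τW hτWmiss
      (by simp [Finset.sdiff_eq_empty_iff_subset.mpr hτWsub]) hτWsub
  obtain ⟨w₀, hw₀⟩ := hWne
  have hcard : Fintype.card ↥(W.erase w₀) = n - 1 := by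
    rw [Fintype.card_coe, Finset.card_erase_of_mem hw₀]
  set eqv : ↥(W.erase w₀) ≃ Fin (n - 1) := Fintype.equivFinOfCardEq hcard with heqv
  set ι : Fin (n - 1) → α := fun i => ((eqv.symm i : ↥(W.erase w₀)) : α) with hι
  have hιe : ∀ i, ι i ∈ W.erase w₀ := fun i => (eqv.symm i).2
  have hιW : ∀ i, ι i ∈ W := fun i => Finset.mem_of_mem_erase (hιe i)
  have hιne : ∀ i, ι i ≠ w₀ := fun i => Finset.ne_of_mem_erase (hιe i)
  have hιsurj : ∀ w ∈ W, w ≠ w₀ → ∃ i, ι i = w := by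
    intro w hw hne
    exact ⟨eqv ⟨w, Finset.mem_erase.mpr ⟨hne, hw⟩⟩, by simp [hι]⟩
  set q : Finset α → EuclideanSpace ℝ (Fin (n - 1)) := fun τ => WithLp.toLp 2 fun i =>
    if ι i ∈ τ then (1 : ℝ) else if w₀ ∈ τ then -(n : ℝ) else 0 with hqdef
  have hnnn : (0:ℝ) ≤ (n:ℝ) := Nat.cast_nonneg n
  have hq_le_one : ∀ τ i, q τ i ≤ 1 := by
    intro τ i
    simp only [hqdef]
    split_ifs
    · exact le_refl 1
    · linarith
    · norm_num
  have hq_le_zero : ∀ τ i, ι i ∉ τ → q τ i ≤ 0 := by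
    intro τ i h
    simp only [hqdef]
    rw [if_neg h]
    split_ifs
    · linarith
    · exact le_refl 0
  have hq_ge : ∀ τ i, -(n:ℝ) ≤ q τ i := by
    intro τ i
    simp only [hqdef]
    split_ifs <;> linarith
  have hq_one : ∀ τ i, ι i ∈ τ → q τ i = 1 := by
    intro τ i h
    simp only [hqdef]
    rw [if_pos h]
  have hq_nonneg_of : ∀ τ, w₀ ∉ τ → ∀ i, 0 ≤ q τ i := by
    intro τ h i
    simp only [hqdef]
    rw [if_neg h]
    split_ifs <;> norm_num
  -- generator families and the convex sets
  set F : α → Set (Finset α) :=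
    fun u => {τ | τ ⊆ W ∧ (u ∈ W → u ∈ τ) ∧ insert u τ ∈ Z} with hFdef
  set C : α → Set (EuclideanSpace ℝ (Fin (n - 1))) :=
    fun u => convexHull ℝ (q '' F u) with hCdef
  have hFW : ∀ u τ, τ ∈ F u → τ ⊆ W ∧ τ ≠ W := by
    intro u τ hτ
    simp only [hFdef, Set.mem_setOf_eq] at hτ
    refine ⟨hτ.1, fun heq => ?_⟩
    rw [heq] at hτ
    by_cases hu : u ∈ W
    · rw [Finset.insert_eq_self.mpr (hτ.2.1 hu)] at hτ
      exact hWZ hτ.2.2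
    · exact hWZ (hZdown (Finset.subset_insert u W) hτ.2.2)
  refine ⟨C, fun u => ⟨(Set.toFinite _).isCompact_convexHull ℝ, convex_convexHull ℝ _⟩, ?_⟩
  intro σ
  constructor
  · -- σ ∈ Z → common point
    intro hσ
    refine ⟨q (σ ∩ W), Set.mem_iInter₂.mpr fun u hu => ?_⟩
    refine subset_convexHull ℝ _ (Set.mem_image_of_mem q ?_)
    exact ⟨Finset.inter_subset_right, fun huW => Finset.mem_inter.mpr ⟨hu, huW⟩,
      hZdown (Finset.insert_subset hu Finset.inter_subset_left) hσ⟩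
  · -- nonempty intersection → σ ∈ Z
    rintro ⟨x, hx⟩
    by_contra hσZ
    have hx' : ∀ u ∈ σ, x ∈ C u := fun u hu => Set.mem_iInter₂.mp hx u hu
    rw [hZdef, Set.mem_setOf_eq] at hσZ
    push_neg at hσZ
    obtain ⟨τ₀, hmiss, hsmall, hsub⟩ := hσZ
    set ρ := τ₀ ∩ W with hρ
    have hρσ : ρ ⊆ σ := Finset.inter_subset_left.trans hsub
    have hρW : ρ ⊆ W := Finset.inter_subset_right
    have hρne : ρ.Nonempty := by
      rcases ρ.eq_empty_or_nonempty with he | h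
      · exfalso
        have hτ₀W : τ₀ \ W = τ₀ := by
          rw [Finset.sdiff_eq_self_iff_disjoint]
          exact Finset.disjoint_iff_inter_eq_empty.mpr he
        have hcard1 : τ₀.card ≤ 1 := by rwa [hτ₀W] at hsmall
        rcases Finset.card_le_one_iff_subset_singleton.mp hcard1 with ⟨v, hv⟩
        rcases Finset.subset_singleton_iff.mp hv with rfl | rfl
        · exact hmiss.1 hempty
        · exact hmiss.1 (hsing v)
      · exact h
    -- the crucial vertex u whose generators never contain ρ
    obtain ⟨u, huσ, hukey⟩ : ∃ u, u ∈ σ ∧ ∀ τ ∈ F u, ¬ ρ ⊆ τ := by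
      by_cases hv : (τ₀ \ W).Nonempty
      · obtain ⟨v, hvmem⟩ := hv
        have hvτ₀ : v ∈ τ₀ := (Finset.mem_sdiff.mp hvmem).1
        refine ⟨v, hsub hvτ₀, ?_⟩
        rintro τ ⟨hτW, -, hins⟩ hρτ
        have hτ₀sub : τ₀ ⊆ insert v τ := by
          intro a ha
          by_cases haW : a ∈ W
          · exact Finset.mem_insert_of_mem (hρτ (Finset.mem_inter.mpr ⟨ha, haW⟩))
          · have hav : a = v :=
              Finset.card_le_one.mp hsmall a (Finset.mem_sdiff.mpr ⟨ha, haW⟩) v hvmem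
            exact hav ▸ Finset.mem_insert_self v τ
        exact hins τ₀ hmiss hsmall hτ₀sub
      · have hτ₀W : τ₀ ⊆ W := by
          intro a ha
          by_contra haW
          exact hv ⟨a, Finset.mem_sdiff.mpr ⟨ha, haW⟩⟩
        have hρτ₀ : ρ = τ₀ := by rw [hρ, Finset.inter_eq_left.mpr hτ₀W]
        obtain ⟨w, hwρ⟩ := hρne
        refine ⟨w, hρσ hwρ, ?_⟩
        rintro τ ⟨hτW, hmem, hins⟩ hρτ
        have hwW : w ∈ W := hρW hwρ
        rw [Finset.insert_eq_self.mpr (hmem hwW)] at hins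
        exact hins τ₀ hmiss hsmall (hρτ₀ ▸ hρτ)
    -- L1 : coordinates on σ are 1
    have hL1 : ∀ i, ι i ∈ σ → x i = 1 := by
      intro i hi
      have hxC : x ∈ C (ι i) := hx' _ hi
      have h1 : ∀ p ∈ q '' F (ι i), lfun (fun j => if j = i then 1 else 0) p = 1 := by
        rintro p ⟨τ, hτ, rfl⟩
        rw [lfun_coord]
        exact hq_one τ i (hτ.2.1 (hιW i))
      have := convexHull_lfun_eq _ _ _ h1 x hxC
      rwa [lfun_coord] at this
    -- L2 : sums over generators containing w₀ are ≤ -2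
    have hsum_all_le : ∀ τ, τ ∈ F w₀ → ∑ i, q τ i ≤ -2 := by
      intro τ hτ
      obtain ⟨hτW, hτne⟩ := hFW w₀ τ hτ
      have hw₀τ : w₀ ∈ τ := hτ.2.1 hw₀
      obtain ⟨w1, hw1W, hw1τ⟩ : ∃ w1, w1 ∈ W ∧ w1 ∉ τ := by
        by_contra hc
        push_neg at hc
        exact hτne (Finset.Subset.antisymm hτW (fun a ha => hc a ha))
      have hw1ne : w1 ≠ w₀ := fun h => hw1τ (h ▸ hw₀τ)
      obtain ⟨i1, hi1⟩ := hιsurj w1 hw1W hw1ne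
      have hterm : q τ i1 = -(n:ℝ) := by
        simp only [hqdef]
        rw [if_neg (by rw [hi1]; exact hw1τ), if_pos hw₀τ]
      have hb : ∑ i ∈ Finset.univ.erase i1, q τ i ≤ ((n - 1 - 1 : ℕ) : ℝ) := by
        have hs := Finset.sum_le_card_nsmul (Finset.univ.erase i1) (q τ) 1
          (fun i _ => hq_le_one τ i)
        rw [nsmul_eq_mul, mul_one] at hs
        rwa [Finset.card_erase_of_mem (Finset.mem_univ i1), Finset.card_univ,
          Fintype.card_fin] at hs
      have hc2 : ((n - 1 - 1 : ℕ) : ℝ) = (n : ℝ) - 2 := by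
        have hh : (n - 1 - 1 : ℕ) = n - 2 := by omega
        rw [hh, Nat.cast_sub h2n]
        norm_num
      have hsplit : ∑ i, q τ i = q τ i1 + ∑ i ∈ Finset.univ.erase i1, q τ i :=
        (Finset.add_sum_erase _ _ (Finset.mem_univ i1)).symm
      rw [hsplit, hterm]
      rw [hc2] at hb
      linarith
    -- sums over the index set of ρ
    set P : Finset (Fin (n-1)) := Finset.univ.filter (fun i => ι i ∈ ρ) with hP
    have hPsum_x : ∑ i ∈ P, x i = (P.card : ℝ) := by
      rw [Finset.sum_congr rfl
        (fun i hi => hL1 i (hρσ ((Finset.mem_filter.mp hi).2))), Finset.sum_const,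
        nsmul_eq_mul, mul_one]
    have hPsum_gen : ∀ τ, (∃ w, w ∈ ρ ∧ w ≠ w₀ ∧ w ∉ τ) →
        ∑ i ∈ P, q τ i ≤ (P.card : ℝ) - 1 := by
      rintro τ ⟨w, hwρ, hwne, hwτ⟩
      obtain ⟨i0, hi0⟩ := hιsurj w (hρW hwρ) hwne
      have hiP : i0 ∈ P := Finset.mem_filter.mpr ⟨Finset.mem_univ _, by rw [hi0]; exact hwρ⟩
      have hterm : q τ i0 ≤ 0 := hq_le_zero τ i0 (by rw [hi0]; exact hwτ)
      have hrest : ∑ i ∈ P.erase i0, q τ i ≤ ((P.erase i0).card : ℝ) := by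
        have hs := Finset.sum_le_card_nsmul (P.erase i0) (q τ) 1 (fun i _ => hq_le_one τ i)
        rwa [nsmul_eq_mul, mul_one] at hs
      have hcarderase : ((P.erase i0).card : ℝ) = (P.card : ℝ) - 1 := by
        rw [Finset.card_erase_of_mem hiP, Nat.cast_sub (Finset.card_pos.mpr ⟨i0, hiP⟩)]
        norm_num
      have hsplit : ∑ i ∈ P, q τ i = q τ i0 + ∑ i ∈ P.erase i0, q τ i :=
        (Finset.add_sum_erase _ _ hiP).symm
      rw [hsplit]
      rw [hcarderase] at hrest
      linarith
    by_cases hw₀ρ : w₀ ∈ ρ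
    · -- case A
      set cA : Fin (n-1) → ℝ := fun i => (if ι i ∈ ρ then (2*(n:ℝ)^2) else 0) - 1 with hcA
      have hlfA : ∀ y : EuclideanSpace ℝ (Fin (n-1)),
          lfun cA y = 2*(n:ℝ)^2 * (∑ i ∈ P, y i) - ∑ i, y i := by
        intro y
        simp only [lfun, hcA, sub_mul, one_mul, Finset.sum_sub_distrib]
        congr 1
        rw [Finset.mul_sum, hP, Finset.sum_filter]
        exact Finset.sum_congr rfl (fun i _ => by split_ifs <;> simp)
      have hBx : ∑ i, x i ≤ -2 := by
        have hh := convexHull_lfun_le (fun _ => (1:ℝ)) (-2) (q '' F w₀) ?_ x (hx' w₀ (hρσ hw₀ρ))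
        · simpa [lfun] using hh
        · rintro p ⟨τ, hτ, rfl⟩
          simpa [lfun] using hsum_all_le τ hτ
      have hlower : 2*(n:ℝ)^2 * P.card + 2 ≤ lfun cA x := by
        rw [hlfA, hPsum_x]
        linarith
      have hupper : lfun cA x ≤ 2*(n:ℝ)^2 * P.card := by
        refine convexHull_lfun_le cA _ (q '' F u) ?_ x (hx' u huσ)
        rintro p ⟨τ, hτ, rfl⟩
        have hρτ := hukey τ hτ
        rw [hlfA]
        by_cases hcase : ∃ w, w ∈ ρ ∧ w ≠ w₀ ∧ w ∉ τ
        · have h1 := hPsum_gen τ hcase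
          have h2 : -(n:ℝ)^2 ≤ ∑ i, q τ i := by
            have hs := Finset.card_nsmul_le_sum Finset.univ (q τ) (-(n:ℝ))
              (fun i _ => hq_ge τ i)
            rw [nsmul_eq_mul, Finset.card_univ, Fintype.card_fin] at hs
            have hcast : ((n - 1 : ℕ) : ℝ) = (n:ℝ) - 1 := by
              rw [Nat.cast_sub (by omega)]
              norm_num
            rw [hcast] at hs
            nlinarith
          nlinarith [sq_nonneg (n:ℝ)]
        · push_neg at hcase
          have hw₀τ : w₀ ∉ τ := by
            intro h
            apply hρτ
            intro w hw
            by_cases hwe : w = w₀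
            · exact hwe ▸ h
            · exact hcase w hw hwe
          have hB0 : 0 ≤ ∑ i, q τ i := Finset.sum_nonneg (fun i _ => hq_nonneg_of τ hw₀τ i)
          have hPle : ∑ i ∈ P, q τ i ≤ (P.card : ℝ) := by
            have hs := Finset.sum_le_card_nsmul P (q τ) 1 (fun i _ => hq_le_one τ i)
            rwa [nsmul_eq_mul, mul_one] at hs
          nlinarith [sq_nonneg (n:ℝ)]
      linarith
    · -- case B
      set cB : Fin (n-1) → ℝ := fun i => if ι i ∈ ρ then (1:ℝ) else 0 with hcB
      have hlfB : ∀ y : EuclideanSpace ℝ (Fin (n-1)), lfun cB y = ∑ i ∈ P, y i := by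
        intro y
        simp only [lfun, hcB]
        rw [hP, Finset.sum_filter]
        exact Finset.sum_congr rfl (fun i _ => by split_ifs <;> simp)
      have hlower : lfun cB x = (P.card : ℝ) := by rw [hlfB, hPsum_x]
      have hupper : lfun cB x ≤ (P.card : ℝ) - 1 := by
        refine convexHull_lfun_le cB _ (q '' F u) ?_ x (hx' u huσ)
        rintro p ⟨τ, hτ, rfl⟩
        rw [hlfB]
        refine hPsum_gen τ ?_
        obtain ⟨w, hwρ, hwτ⟩ := Finset.not_subset.mp (hukey τ hτ)
        exact ⟨w, hwρ, fun h => hw₀ρ (h ▸ hwρ), hwτ⟩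
      linarith

lemma rep_iInter {α : Type*} {k : ℕ} (d : Fin k → ℕ) (Xs : Fin k → Set (Finset α))
    (h : ∀ i, IsRepresentable (d i) (Xs i)) :
    IsRepresentable (∑ i, d i) (⋂ i, Xs i) := by
  classical
  choose C hC using h
  let e : (Σ i : Fin k, Fin (d i)) ≃ Fin (∑ i, d i) :=
    Fintype.equivFinOfCardEq (by simp)
  let Ψ : EuclideanSpace ℝ (Fin (∑ i, d i)) →ₗ[ℝ] (∀ i, EuclideanSpace ℝ (Fin (d i))) :=
    { toFun := fun x i => WithLp.toLp 2 fun j => x (e ⟨i, j⟩),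
      map_add' := fun _ _ => rfl,
      map_smul' := fun _ _ => rfl }
  let Ψ' : (∀ i, EuclideanSpace ℝ (Fin (d i))) →ₗ[ℝ] EuclideanSpace ℝ (Fin (∑ i, d i)) :=
    { toFun := fun p => WithLp.toLp 2 fun r => p (e.symm r).1 (e.symm r).2,
      map_add' := fun _ _ => rfl,
      map_smul' := fun _ _ => rfl }
  have hΨ'Ψ : ∀ x, Ψ' (Ψ x) = x := by
    intro x
    ext r
    show x (e (e.symm r)) = x r
    exact congrArg x (e.apply_symm_apply r)
  have hΨΨ' : ∀ p, Ψ (Ψ' p) = p := by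
    intro p
    funext i
    ext j
    show p (e.symm (e ⟨i, j⟩)).1 (e.symm (e ⟨i, j⟩)).2 = p i j
    exact congrArg (fun s : (Σ i : Fin k, Fin (d i)) => p s.1 s.2) (e.symm_apply_apply ⟨i, j⟩)
  refine ⟨fun v => Ψ ⁻¹' (Set.univ.pi fun i => C i v), fun v => ⟨?_, ?_⟩, ?_⟩
  · have hSc : IsCompact (Set.univ.pi fun i => C i v) :=
      isCompact_univ_pi (fun i => ((hC i).1 v).1)
    have himg : Ψ ⁻¹' (Set.univ.pi fun i => C i v) =
        Ψ' '' (Set.univ.pi fun i => C i v) := by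
      ext x
      constructor
      · intro hx
        exact ⟨Ψ x, hx, hΨ'Ψ x⟩
      · rintro ⟨p, hp, rfl⟩
        simp only [Set.mem_preimage, hΨΨ']
        exact hp
    show IsCompact (Ψ ⁻¹' (Set.univ.pi fun i => C i v))
    rw [himg]
    exact hSc.image Ψ'.continuous_of_finiteDimensional
  · exact (convex_pi fun i _ => ((hC i).1 v).2).linear_preimage Ψ
  · intro σ
    constructor
    · intro hσ
      have h1 : ∀ i, (⋂ v ∈ σ, C i v).Nonempty :=
        fun i => ((hC i).2 σ).mp (Set.mem_iInter.mp hσ i)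
      choose y hy using h1
      refine ⟨Ψ' y, Set.mem_iInter₂.mpr fun v hv => ?_⟩
      simp only [Set.mem_preimage, hΨΨ']
      exact fun i _ => Set.mem_iInter₂.mp (hy i) v hv
    · rintro ⟨x, hx⟩
      refine Set.mem_iInter.mpr fun i => ?_
      refine ((hC i).2 σ).mpr ⟨Ψ x i, Set.mem_iInter₂.mpr fun v hv => ?_⟩
      exact Set.mem_iInter₂.mp hx v hv i (Set.mem_univ i)

/-- If `V₁,…,V_k ∉ X` and every missing face `τ` of `X` satisfies
`|τ \ Vᵢ| ≤ 1` for some `i`, then `X` is the intersection of complexes `Xᵢ`, each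
`(|Vᵢ|−1)`-representable; in particular `X` is `(∑ᵢ (|Vᵢ|−1))`-representable. -/
theorem representable_of_dominating_family {α : Type*} [Fintype α] [DecidableEq α]
    (X : Set (Finset α)) (hX : IsSimplicialComplex X)
    (hempty : ∅ ∈ X) (hsing : ∀ v : α, {v} ∈ X)
    (k : ℕ) (V : Fin k → Finset α) (hV : ∀ i, V i ∉ X)
    (hdom : ∀ τ : Finset α, IsMissingFace X τ → ∃ i, (τ \ V i).card ≤ 1) :
    (∃ Xs : Fin k → Set (Finset α),
        X = ⋂ i, Xs i ∧ ∀ i, IsRepresentable ((V i).card - 1) (Xs i)) ∧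
      IsRepresentable (∑ i, ((V i).card - 1)) X := by
  classical
  set Zs : Fin k → Set (Finset α) :=
    fun i => {σ : Finset α | ∀ τ, IsMissingFace X τ → (τ \ V i).card ≤ 1 → ¬ τ ⊆ σ} with hZs
  have hXeq : X = ⋂ i, Zs i := by
    ext σ
    constructor
    · intro hσ
      refine Set.mem_iInter.mpr fun i τ hmiss _ hsub => ?_
      exact hmiss.1 (hX σ hσ τ hsub)
    · intro hσ
      by_contra hσX
      obtain ⟨τ, hτσ, hmiss⟩ := exists_missing_face X σ hσX
      obtain ⟨i, hi⟩ := hdom τ hmiss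
      exact Set.mem_iInter.mp hσ i τ hmiss hi hτσ
  have hrep : ∀ i, IsRepresentable ((V i).card - 1) (Zs i) :=
    fun i => rep_Z X hX hempty hsing (V i) (hV i)
  refine ⟨⟨Zs, hXeq, hrep⟩, ?_⟩
  rw [hXeq]
  exact rep_iInter (fun i => (V i).card - 1) Zs hrep
end

section
/- Let M be a partial Steiner (d, d+1, n)-system on V, and let τ₁, τ₂ ∈ M be distinct with |τ₁ ∩ τ₂| = k maximal among pairs of distinct members. Let τ ∈ M, τ ∉ {τ₁, τ₂}, with τ ⊆ τ₁ ∪ τ₂. Then τ \ (τ₁ ∩ τ₂) = (τ₁ ∪ τ₂) \ (τ₁ ∩ τ₂); in particular τ ∪ τ₁ = τ₁ ∪ τ₂ and τ ∪ τ₂ = τ₁ ∪ τ₂. -/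
/-- In a partial Steiner (d,d+1,n)-system `M`, if `τ₁ ≠ τ₂` have intersection
of maximal size among pairs of distinct members, and `τ ∈ M`, `τ ∉ {τ₁, τ₂}`,
`τ ⊆ τ₁ ∪ τ₂`, then `τ \ (τ₁ ∩ τ₂) = (τ₁ ∪ τ₂) \ (τ₁ ∩ τ₂)`; in particular
`τ ∪ τ₁ = τ₁ ∪ τ₂` and `τ ∪ τ₂ = τ₁ ∪ τ₂`. -/
theorem partialSteiner_max_inter {α : Type*} [Fintype α] [DecidableEq α]
    (n d : ℕ) (hd : 1 ≤ d) (hn : Fintype.card α = n)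
    (M : Finset (Finset α))
    (hMcard : ∀ σ ∈ M, σ.card = d + 1)
    (hMpartial : ∀ η : Finset α, η.card = d → (M.filter fun σ => η ⊆ σ).card ≤ 1)
    (τ₁ τ₂ : Finset α) (hτ₁ : τ₁ ∈ M) (hτ₂ : τ₂ ∈ M) (hne : τ₁ ≠ τ₂)
    (hmax : ∀ σ ∈ M, ∀ σ' ∈ M, σ ≠ σ' → (σ ∩ σ').card ≤ (τ₁ ∩ τ₂).card)
    (τ : Finset α) (hτ : τ ∈ M) (hττ₁ : τ ≠ τ₁) (hττ₂ : τ ≠ τ₂)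
    (hsub : τ ⊆ τ₁ ∪ τ₂) :
    τ \ (τ₁ ∩ τ₂) = (τ₁ ∪ τ₂) \ (τ₁ ∩ τ₂) ∧
      τ ∪ τ₁ = τ₁ ∪ τ₂ ∧ τ ∪ τ₂ = τ₁ ∪ τ₂ := by
  have hk1 : (τ ∩ τ₁).card ≤ (τ₁ ∩ τ₂).card := hmax τ hτ τ₁ hτ₁ hττ₁
  have hk2 : (τ ∩ τ₂).card ≤ (τ₁ ∩ τ₂).card := hmax τ hτ τ₂ hτ₂ hττ₂
  have e1 : (τ ∩ τ₁).card + (τ \ τ₁).card = d + 1 := by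
    rw [Finset.card_inter_add_card_sdiff, hMcard τ hτ]
  have e1' : (τ ∩ τ₂).card + (τ \ τ₂).card = d + 1 := by
    rw [Finset.card_inter_add_card_sdiff, hMcard τ hτ]
  have e2 : (τ₂ ∩ τ₁).card + (τ₂ \ τ₁).card = d + 1 := by
    rw [Finset.card_inter_add_card_sdiff, hMcard τ₂ hτ₂]
  have e2' : (τ₁ ∩ τ₂).card + (τ₁ \ τ₂).card = d + 1 := by
    rw [Finset.card_inter_add_card_sdiff, hMcard τ₁ hτ₁]
  have hcomm : (τ₂ ∩ τ₁).card = (τ₁ ∩ τ₂).card := by rw [Finset.inter_comm]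
  have h1 : τ \ τ₁ ⊆ τ₂ \ τ₁ := by
    intro x hx
    rcases Finset.mem_sdiff.1 hx with ⟨hxτ, hx1⟩
    exact Finset.mem_sdiff.2 ⟨(Finset.mem_union.1 (hsub hxτ)).resolve_left hx1, hx1⟩
  have h2 : τ \ τ₂ ⊆ τ₁ \ τ₂ := by
    intro x hx
    rcases Finset.mem_sdiff.1 hx with ⟨hxτ, hx2⟩
    exact Finset.mem_sdiff.2 ⟨(Finset.mem_union.1 (hsub hxτ)).resolve_right hx2, hx2⟩
  have hc1 : (τ \ τ₁).card ≤ (τ₂ \ τ₁).card := Finset.card_le_card h1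
  have hc2 : (τ \ τ₂).card ≤ (τ₁ \ τ₂).card := Finset.card_le_card h2
  have hBeq : τ \ τ₁ = τ₂ \ τ₁ := Finset.eq_of_subset_of_card_le h1 (by omega)
  have hAeq : τ \ τ₂ = τ₁ \ τ₂ := Finset.eq_of_subset_of_card_le h2 (by omega)
  have hB : τ₂ \ τ₁ ⊆ τ := hBeq ▸ Finset.sdiff_subset
  have hA : τ₁ \ τ₂ ⊆ τ := hAeq ▸ Finset.sdiff_subset
  refine ⟨?_, ?_, ?_⟩
  · ext x
    simp only [Finset.mem_sdiff, Finset.mem_union, Finset.mem_inter]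
    constructor
    · rintro ⟨hx, hni⟩
      exact ⟨Finset.mem_union.1 (hsub hx), hni⟩
    · rintro ⟨hx, hni⟩
      refine ⟨?_, hni⟩
      rcases hx with hx | hx
      · exact hA (Finset.mem_sdiff.2 ⟨hx, fun h => hni ⟨hx, h⟩⟩)
      · exact hB (Finset.mem_sdiff.2 ⟨hx, fun h => hni ⟨h, hx⟩⟩)
  · apply Finset.Subset.antisymm
    · exact Finset.union_subset hsub Finset.subset_union_left
    · intro x hx
      rcases Finset.mem_union.1 hx with hx | hx
      · exact Finset.mem_union_right _ hx
      · by_cases h1' : x ∈ τ₁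
        · exact Finset.mem_union_right _ h1'
        · exact Finset.mem_union_left _ (hB (Finset.mem_sdiff.2 ⟨hx, h1'⟩))
  · apply Finset.Subset.antisymm
    · exact Finset.union_subset hsub Finset.subset_union_right
    · intro x hx
      rcases Finset.mem_union.1 hx with hx | hx
      · by_cases h2' : x ∈ τ₂
        · exact Finset.mem_union_right _ h2'
        · exact Finset.mem_union_left _ (hA (Finset.mem_sdiff.2 ⟨hx, h2'⟩))
      · exact Finset.mem_union_right _ hx
end

section
/- Let X be a d-representable simplicial complex on vertex set V (the nerve of a family of compact convex sets in ℝ^d), and let σ₁, σ₂ ⊆ V with σ₁ ∩ σ₂ ∈ X. Then the complex X' = X ∪ 2^{σ₁} ∪ 2^{σ₂} (adding all subsets of σ₁ and all subsets of σ₂ as faces) is (d+1)-representable. -/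
open Set

/-- The coordinate-inclusion `ℝ^d → ℝ^{d+1}` as a linear map. -/
noncomputable def jmap (d : ℕ) :
    EuclideanSpace ℝ (Fin d) →ₗ[ℝ] EuclideanSpace ℝ (Fin (d + 1)) where
  toFun x := WithLp.toLp 2 (fun i => if h : (i : ℕ) < d then x ⟨i, h⟩ else 0)
  map_add' x y := by
    ext i
    by_cases h : (i : ℕ) < d <;> simp [h, PiLp.add_apply]
  map_smul' c x := by
    ext i
    by_cases h : (i : ℕ) < d <;> simp [h, PiLp.smul_apply]

/-- The last coordinate of `ℝ^{d+1}` as a linear functional. -/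
noncomputable def pimap (d : ℕ) : EuclideanSpace ℝ (Fin (d + 1)) →ₗ[ℝ] ℝ where
  toFun z := z (Fin.last d)
  map_add' x y := rfl
  map_smul' c x := rfl

lemma pimap_jmap (d : ℕ) (x : EuclideanSpace ℝ (Fin d)) : pimap d (jmap d x) = 0 := by
  exact dif_neg (lt_irrefl d)

lemma isCompact_convexJoin {E : Type*} [AddCommGroup E] [Module ℝ E] [TopologicalSpace E]
    [IsTopologicalAddGroup E] [ContinuousSMul ℝ E] {s t : Set E}
    (hs : IsCompact s) (ht : IsCompact t) : IsCompact (convexJoin ℝ s t) := by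
  have hst : convexJoin ℝ s t =
      (fun p : (ℝ × E) × E => (1 - p.1.1) • p.1.2 + p.1.1 • p.2) ''
        ((Icc (0 : ℝ) 1 ×ˢ s) ×ˢ t) := by
    ext z
    simp only [mem_convexJoin, mem_image, mem_prod, segment_eq_image, Prod.exists]
    constructor
    · rintro ⟨a, ha, b, hb, ⟨θ, hθ, rfl⟩⟩
      exact ⟨θ, a, b, ⟨⟨hθ, ha⟩, hb⟩, rfl⟩
    · rintro ⟨θ, a, b, ⟨⟨hθ, ha⟩, hb⟩, rfl⟩
      exact ⟨a, ha, b, hb, θ, hθ, rfl⟩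
  rw [hst]
  exact ((isCompact_Icc.prod hs).prod ht).image (by fun_prop)

lemma isCompact_convexHull_union_finite {E : Type*} [AddCommGroup E] [Module ℝ E]
    [TopologicalSpace E] [IsTopologicalAddGroup E] [ContinuousSMul ℝ E] {s F : Set E}
    (hs : IsCompact s) (hsc : Convex ℝ s) (hF : F.Finite) :
    IsCompact (convexHull ℝ (s ∪ F)) := by
  rcases F.eq_empty_or_nonempty with rfl | hFne
  · simpa [hsc.convexHull_eq] using hs
  rcases s.eq_empty_or_nonempty with rfl | hsne
  · simpa using hF.isCompact_convexHull (𝕜 := ℝ)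
  · rw [convexHull_union hsne hFne, hsc.convexHull_eq]
    exact isCompact_convexJoin hs (hF.isCompact_convexHull (𝕜 := ℝ))

/-- If `X` is d-representable and `σ₁ ∩ σ₂ ∈ X`, then the complex obtained
from `X` by adding all subsets of `σ₁` and all subsets of `σ₂` is (d+1)-representable. -/
theorem representable_add_two_simplices {α : Type*} [Fintype α] [DecidableEq α]
    (d : ℕ) (X : Set (Finset α)) (hX : IsRepresentable d X)
    (σ₁ σ₂ : Finset α) (h : σ₁ ∩ σ₂ ∈ X) :
    IsRepresentable (d + 1)
      (X ∪ {σ : Finset α | σ ⊆ σ₁} ∪ {σ : Finset α | σ ⊆ σ₂}) := by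
  classical
  obtain ⟨C, hC, hmem⟩ := hX
  obtain ⟨p, hp⟩ : (⋂ v ∈ σ₁ ∩ σ₂, C v).Nonempty := (hmem _).mp h
  have hpC : ∀ v, v ∈ σ₁ → v ∈ σ₂ → p ∈ C v := fun v h1 h2 =>
    Set.mem_iInter₂.mp hp v (Finset.mem_inter.mpr ⟨h1, h2⟩)
  set j := jmap d with hj
  set π := pimap d with hπdef
  set u : EuclideanSpace ℝ (Fin (d + 1)) := EuclideanSpace.single (Fin.last d) 1 with hu
  have hπu : π u = 1 := by rw [hπdef, hu]; show (EuclideanSpace.single (Fin.last d) (1:ℝ)) (Fin.last d) = 1; simp [EuclideanSpace.single_apply]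
  have hπj : ∀ x, π (j x) = 0 := fun x => pimap_jmap d x
  have hjcont : Continuous j := j.continuous_of_finiteDimensional
  set P : EuclideanSpace ℝ (Fin (d + 1)) := j p with hP
  set S : α → Set (EuclideanSpace ℝ (Fin (d + 1))) := fun v =>
    (j '' C v) ∪ ((if v ∈ σ₁ then {P + u} else ∅) ∪ (if v ∈ σ₂ then {P - u} else ∅)) with hS
  -- retraction
  have hretr : ∀ z : EuclideanSpace ℝ (Fin (d + 1)), ∀ x, j x = z →
      WithLp.toLp 2 (fun i : Fin d => z i.castSucc) = x := by
    rintro z x rfl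
    ext i
    simp [hj, jmap]
  refine ⟨fun v => convexHull ℝ (S v), fun v => ⟨?_, convex_convexHull _ _⟩, fun σ => ?_⟩
  · -- compactness
    refine isCompact_convexHull_union_finite ((hC v).1.image hjcont)
      ((hC v).2.linear_image j) ?_
    refine Set.Finite.union ?_ ?_ <;> split_ifs <;> simp
  constructor
  · -- forward
    rintro ((hσX | hσ1) | hσ2)
    · obtain ⟨x, hx⟩ := (hmem σ).mp hσX
      refine ⟨j x, Set.mem_iInter₂.mpr fun v hv => subset_convexHull ℝ _ ?_⟩
      exact Or.inl ⟨x, Set.mem_iInter₂.mp hx v hv, rfl⟩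
    · refine ⟨P + u, Set.mem_iInter₂.mpr fun v hv => subset_convexHull ℝ _ ?_⟩
      have : v ∈ σ₁ := hσ1 hv
      simp [hS, this]
    · refine ⟨P - u, Set.mem_iInter₂.mpr fun v hv => subset_convexHull ℝ _ ?_⟩
      have : v ∈ σ₂ := hσ2 hv
      simp [hS, this]
  · -- backward
    rintro ⟨z, hz⟩
    have hzv : ∀ v ∈ σ, z ∈ convexHull ℝ (S v) := Set.mem_iInter₂.mp hz
    rcases lt_trichotomy (π z) 0 with ht | ht | ht
    · -- σ ⊆ σ₂
      refine Or.inr fun v hv => ?_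
      by_contra hv2
      have hsub : S v ⊆ {w | 0 ≤ π w} := by
        rintro w (⟨x, _, rfl⟩ | hw)
        · simp [hπj]
        · rcases hw with hw | hw
          · split_ifs at hw
            · rcases hw with rfl
              simp [map_add, hπj, hπu, hP]
            · exact absurd hw (Set.notMem_empty _)
          · simp [hv2] at hw
      have := convexHull_min hsub (convex_halfSpace_ge π.isLinear 0) (hzv v hv)
      exact absurd this (by simpa using ht)
    · -- σ ∈ X
      have hslice : ∀ v ∈ σ, z ∈ j '' C v := by
        intro v hv
        have hzS := hzv v hv
        by_cases h1 : v ∈ σ₁ <;> by_cases h2 : v ∈ σ₂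
        · -- both apexes present
          have hpv : p ∈ C v := hpC v h1 h2
          have hne : (j '' C v).Nonempty := ⟨j p, p, hpv, rfl⟩
          have hSv : S v = insert (P + u) (insert (P - u) (j '' C v)) := by
            simp only [hS, h1, h2, if_true]
            rw [Set.union_comm, Set.union_assoc, Set.singleton_union, Set.singleton_union]
          rw [hSv, convexHull_insert ⟨P - u, Set.mem_insert _ _⟩,
            convexHull_insert hne, ((hC v).2.linear_image j).convexHull_eq] at hzS
          rw [mem_convexJoin] at hzS
          obtain ⟨a', ha', y, hy, hseg⟩ := hzS
          rcases ha' with rfl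
          rw [mem_convexJoin] at hy
          obtain ⟨b', hb', q, hq, hseg'⟩ := hy
          rcases hb' with rfl
          obtain ⟨w, hw, rfl⟩ := hq
          obtain ⟨a, b, hab, hbb, habs, rfl⟩ := hseg
          obtain ⟨c, e, hcc, hee, hces, rfl⟩ := hseg'
          have hπz : a - b * c = 0 := by
            have := ht
            simp only [map_add, map_smul, map_sub, hπj, hπu, hP, smul_eq_mul] at this
            linarith
          have ha : a = b * c := by linarith
          refine ⟨(a + b * c) • p + (b * e) • w, ?_, ?_⟩
          · refine (hC v).2 hpv hw (by nlinarith) (by positivity) ?_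
            have : b * c + b * e = b := by rw [← mul_add, hces, mul_one]
            linarith
          · rw [map_add, map_smul, map_smul, ha]
            simp only [hP]
            module
        · -- only apex P + u
          have hSv : S v = insert (P + u) (j '' C v) := by
            simp only [hS, h1, h2, if_true, if_false]
            rw [Set.union_empty, Set.union_comm, Set.singleton_union]
          rcases (C v).eq_empty_or_nonempty with hCe | ⟨w0, hw0⟩
          · rw [hSv, hCe, Set.image_empty] at hzS
            rw [show insert (P + u) (∅ : Set (EuclideanSpace ℝ (Fin (d + 1)))) = {P + u} by simp,
              convexHull_singleton, Set.mem_singleton_iff] at hzS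
            subst hzS
            exfalso
            simp [map_add, hπj, hπu, hP] at ht
          · have hne : (j '' C v).Nonempty := ⟨j w0, w0, hw0, rfl⟩
            rw [hSv, convexHull_insert hne, ((hC v).2.linear_image j).convexHull_eq,
              mem_convexJoin] at hzS
            obtain ⟨a', ha', q, hq, hseg⟩ := hzS
            rcases ha' with rfl
            obtain ⟨w, hw, rfl⟩ := hq
            obtain ⟨a, b, hab, hbb, habs, rfl⟩ := hseg
            have hπz : a = 0 := by
              have := ht
              simp only [map_add, map_smul, hπj, hπu, hP, smul_eq_mul] at this
              linarith
            have hb1 : b = 1 := by linarith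
            refine ⟨w, hw, ?_⟩
            rw [hπz, hb1]
            simp
        · -- only apex P - u
          have hSv : S v = insert (P - u) (j '' C v) := by
            simp only [hS, h1, h2, if_true, if_false]
            rw [Set.empty_union, Set.union_comm, Set.singleton_union]
          rcases (C v).eq_empty_or_nonempty with hCe | ⟨w0, hw0⟩
          · rw [hSv, hCe, Set.image_empty] at hzS
            rw [show insert (P - u) (∅ : Set (EuclideanSpace ℝ (Fin (d + 1)))) = {P - u} by simp,
              convexHull_singleton, Set.mem_singleton_iff] at hzS
            subst hzS
            exfalso
            simp [map_sub, hπj, hπu, hP] at ht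
          · have hne : (j '' C v).Nonempty := ⟨j w0, w0, hw0, rfl⟩
            rw [hSv, convexHull_insert hne, ((hC v).2.linear_image j).convexHull_eq,
              mem_convexJoin] at hzS
            obtain ⟨a', ha', q, hq, hseg⟩ := hzS
            rcases ha' with rfl
            obtain ⟨w, hw, rfl⟩ := hq
            obtain ⟨a, b, hab, hbb, habs, rfl⟩ := hseg
            have hπz : a = 0 := by
              have := ht
              simp only [map_add, map_sub, map_smul, hπj, hπu, hP, smul_eq_mul] at this
              linarith
            have hb1 : b = 1 := by linarith
            refine ⟨w, hw, ?_⟩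
            rw [hπz, hb1]
            simp
        · -- no apex
          have hSv : S v = j '' C v := by
            simp [hS, h1, h2]
          rw [hSv, ((hC v).2.linear_image j).convexHull_eq] at hzS
          exact hzS
      refine Or.inl (Or.inl ?_)
      rw [hmem σ]
      refine ⟨WithLp.toLp 2 (fun i : Fin d => z i.castSucc), Set.mem_iInter₂.mpr fun v hv => ?_⟩
      obtain ⟨x, hx, hjx⟩ := hslice v hv
      rw [hretr z x hjx]
      exact hx
    · -- σ ⊆ σ₁
      refine Or.inl (Or.inr fun v hv => ?_)
      by_contra hv1
      have hsub : S v ⊆ {w | π w ≤ 0} := by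
        rintro w (⟨x, _, rfl⟩ | hw)
        · simp [hπj]
        · rcases hw with hw | hw
          · simp [hv1] at hw
          · split_ifs at hw
            · rcases hw with rfl
              simp [map_sub, hπj, hπu, hP]
            · exact absurd hw (Set.notMem_empty _)
      have := convexHull_min hsub (convex_halfSpace_le π.isLinear 0) (hzv v hv)
      exact absurd this (by simpa using ht)
end

section
/- Let X be a simplicial complex on vertex set V of size n ≥ d+2 with h(X) = d, whose family of (d+1)-element non-faces contains a Steiner (d, d+1, n)-system A that equals the set of all (d+1)-subsets of V not in X. Then X has no missing face of size at most d; consequently the set of missing faces of X is exactly A. -/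
/-- Any non-face contains a missing face. -/
lemma exists_missingFace_subset {α : Type*} [DecidableEq α] (X : Set (Finset α))
    (σ : Finset α) (hσ : σ ∉ X) : ∃ ρ, ρ ⊆ σ ∧ IsMissingFace X ρ := by
  induction σ using Finset.strongInduction with
  | _ σ ih =>
    by_cases h : ∀ π, π ⊂ σ → π ∈ X
    · exact ⟨σ, Finset.Subset.refl σ, hσ, h⟩
    · push_neg at h
      obtain ⟨π, hπs, hπ⟩ := h
      obtain ⟨ρ, hρπ, hρ⟩ := ih π hπs hπ
      exact ⟨ρ, hρπ.trans hπs.subset, hρ⟩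

/-- Let `X` be a complex on `n ≥ d+2` vertices with `h(X) = d`, such that the
family of all `(d+1)`-element non-faces of `X` is a Steiner (d,d+1,n)-system. Then `X` has no
missing face of size at most `d`, and consequently the missing faces of `X` are exactly the
`(d+1)`-element non-faces. -/
theorem missingFaces_eq_steiner {α : Type*} [Fintype α] [DecidableEq α]
    (n d : ℕ) (hn : Fintype.card α = n) (hnd : d + 2 ≤ n)
    (X : Set (Finset α)) (hX : IsSimplicialComplex X)
    (hempty : ∅ ∈ X) (hsing : ∀ v : α, {v} ∈ X)
    (hhle : ∀ τ : Finset α, IsMissingFace X τ → τ.card ≤ d + 1)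
    (hheq : ∃ τ : Finset α, IsMissingFace X τ ∧ τ.card = d + 1)
    (hsteiner : ∀ η : Finset α, η.card = d →
      ∃! σ : Finset α, (σ.card = d + 1 ∧ σ ∉ X) ∧ η ⊆ σ) :
    (∀ τ : Finset α, IsMissingFace X τ → ¬ τ.card ≤ d) ∧
      (∀ τ : Finset α, IsMissingFace X τ ↔ (τ.card = d + 1 ∧ τ ∉ X)) := by
  have part1 : ∀ τ : Finset α, IsMissingFace X τ → ¬ τ.card ≤ d := by
    intro τ hτ hcard
    -- extend τ to a set η of size d
    obtain ⟨η, hτη, hηcard⟩ := Finset.exists_superset_card_eq hcard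
      (by omega : d ≤ Fintype.card α)
    -- complement of η has at least two elements
    have hcompl : 2 ≤ ηᶜ.card := by
      have := Finset.card_compl η
      omega
    obtain ⟨a, ha, b, hb, hab⟩ := Finset.one_lt_card.mp hcompl
    have haη : a ∉ η := Finset.mem_compl.mp ha
    have hbη : b ∉ η := Finset.mem_compl.mp hb
    obtain ⟨σ, _, huniq⟩ := hsteiner η hηcard
    have key : ∀ c : α, c ∉ η → insert c η = σ := by
      intro c hc
      apply huniq
      refine ⟨⟨by rw [Finset.card_insert_of_notMem hc, hηcard], ?_⟩,
        Finset.subset_insert c η⟩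
      intro hmem
      exact hτ.1 (hX _ hmem τ (hτη.trans (Finset.subset_insert c η)))
    have : insert a η = insert b η := (key a haη).trans (key b hbη).symm
    have : a ∈ insert b η := this ▸ Finset.mem_insert_self a η
    rcases Finset.mem_insert.mp this with h | h
    · exact hab h
    · exact haη h
  refine ⟨part1, fun τ => ⟨fun hτ => ⟨?_, hτ.1⟩, fun ⟨hc, hτX⟩ => ?_⟩⟩
  · have h1 := hhle τ hτ
    have h2 := part1 τ hτ
    omega
  · refine ⟨hτX, fun σ hσ => ?_⟩
    by_contra hσX
    obtain ⟨ρ, hρσ, hρ⟩ := exists_missingFace_subset X σ hσX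
    have hρc : ρ.card ≤ d := by
      have := (Finset.card_le_card hρσ).trans_lt
        (Finset.card_lt_card hσ)
      omega
    exact part1 ρ hρ hρc
end
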